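/- For the one-vertex quiver with no arrows, the CoHa product of f ∈ Q[x_1,...,x_d]^{S_d} and g ∈ Q[x_1,...,x_e]^{S_e} is given by the shuffle formula (f*g)(x_1,...,x_{d+e}) = Σ_σ f(x_{σ(1)},...,x_{σ(d)}) g(x_{σ(d+1)},...,x_{σ(d+e)}) / Π_{μ=1}^{d} Π_{ν=d+1}^{d+e} (x_{σ(ν)} − x_{σ(μ)}), where σ ranges over (d,e)-shuffles, and this expression is a symmetric polynomial in x_1,...,x_{d+e} (the apparent denominators cancel). -/

import Mathlib

open MvPolynomial

attribute [local instance] Classical.propDecidable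

/-- `σ ∈ S_{d+e}` is a `(d,e)`-shuffle: it is strictly increasing on the first
`d` positions and on the last `e` positions. -/
def IsShuffle {d e : ℕ} (σ : Equiv.Perm (Fin (d + e))) : Prop :=
  StrictMono (fun i : Fin d => σ (Fin.castAdd e i)) ∧
    StrictMono (fun j : Fin e => σ (Fin.natAdd d j))

namespace CohaAux

variable {n : ℕ}

/-- The substitution `X i ↦ X j`. -/
noncomputable def subst (i j : Fin n) :
    MvPolynomial (Fin n) ℚ →ₐ[ℚ] MvPolynomial (Fin n) ℚ :=
  aeval (fun k => if k = i then X j else X k)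

theorem subst_X (i j k : Fin n) :
    subst i j (X k) = if k = i then X j else X k := by
  simp [subst]

theorem dvd_sub_subst (i j : Fin n) (p : MvPolynomial (Fin n) ℚ) :
    (X i - X j : MvPolynomial (Fin n) ℚ) ∣ p - subst i j p := by
  induction p using MvPolynomial.induction_on with
  | C a => simp [subst]
  | add p q hp hq =>
      have := dvd_add hp hq
      rw [map_add]
      convert this using 1
      ring
  | mul_X p k hp =>
      rw [map_mul, subst_X]
      have key : p * X k - subst i j p * (if k = i then X j else X k)
          = (p - subst i j p) * X k + subst i j p * (X k - if k = i then X j else X k) := by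
        ring
      rw [key]
      refine dvd_add (hp.mul_right _) (Dvd.dvd.mul_left ?_ _)
      by_cases hk : k = i
      · subst hk; simp
      · simp [hk]

theorem subst_rename_swap (i j : Fin n) (hij : i ≠ j) (p : MvPolynomial (Fin n) ℚ) :
    subst i j (rename (Equiv.swap i j) p) = subst i j p := by
  rw [subst, aeval_rename]
  have hfun : ((fun k => if k = i then X j else X k) ∘ ⇑(Equiv.swap i j))
      = (fun k : Fin n => if k = i then (X j : MvPolynomial (Fin n) ℚ) else X k) := by
    funext k
    simp only [Function.comp_apply]
    rcases eq_or_ne k i with rfl | hki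
    · rw [Equiv.swap_apply_left, if_neg hij.symm, if_pos rfl]
    · rcases eq_or_ne k j with rfl | hkj
      · rw [Equiv.swap_apply_right, if_pos rfl]
        split <;> rfl
      · rw [Equiv.swap_apply_of_ne_of_ne hki hkj]
  rw [hfun]

theorem prime_X_sub_X {i j : Fin n} (h : j ≠ i) :
    Prime (X j - X i : MvPolynomial (Fin n) ℚ) := by
  classical
  let e : MvPolynomial (Fin n) ℚ ≃ₐ[ℚ] Polynomial (MvPolynomial {b : Fin n // b ≠ j} ℚ) :=
    (renameEquiv ℚ (Equiv.optionSubtypeNe j).symm).trans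
      (optionEquivLeft ℚ {b : Fin n // b ≠ j})
  have he : e (X j - X i) = Polynomial.X - Polynomial.C (X ⟨i, fun hh => h hh.symm⟩) := by
    have h1 : (Equiv.optionSubtypeNe j).symm j = none := Equiv.optionSubtypeNe_symm_self j
    have h2 : (Equiv.optionSubtypeNe j).symm i = some ⟨i, fun hh => h hh.symm⟩ :=
      Equiv.optionSubtypeNe_symm_of_ne (fun hh => h hh.symm)
    simp [e, renameEquiv_apply, h1, h2, optionEquivLeft_X_none, optionEquivLeft_X_some]
  have hp : Prime (e (X j - X i)) := by
    rw [he]; exact Polynomial.prime_X_sub_C _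
  exact (MulEquiv.prime_iff e.toRingEquiv.toMulEquiv).mp hp

theorem prod_primes_dvd' {ι : Type*} {R : Type*} [CommRing R] [IsDomain R]
    (s : Finset ι) (p : ι → R) (hp : ∀ q ∈ s, Prime (p q))
    (hna : ∀ q ∈ s, ∀ q' ∈ s, q ≠ q' → ¬Associated (p q) (p q'))
    {a : R} (ha : ∀ q ∈ s, p q ∣ a) : (∏ q ∈ s, p q) ∣ a := by
  classical
  induction s using Finset.induction_on generalizing a with
  | empty => simpa using one_dvd a
  | @insert q s hq ih =>
      obtain ⟨b, rfl⟩ := ha q (Finset.mem_insert_self q s)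
      rw [Finset.prod_insert hq]
      refine mul_dvd_mul_left _ (ih ?_ ?_ ?_)
      · exact fun r hr => hp r (Finset.mem_insert_of_mem hr)
      · exact fun r hr r' hr' hne =>
          hna r (Finset.mem_insert_of_mem hr) r' (Finset.mem_insert_of_mem hr') hne
      · intro r hr
        have hrq : r ≠ q := fun hh => hq (hh ▸ hr)
        have hdvd : p r ∣ p q * b := ha r (Finset.mem_insert_of_mem hr)
        rcases (hp r (Finset.mem_insert_of_mem hr)).2.2 _ _ hdvd with h1 | h1
        · exact absurd ((hp r (Finset.mem_insert_of_mem hr)).associated_of_dvd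
            (hp q (Finset.mem_insert_self q s)) h1)
            (hna r (Finset.mem_insert_of_mem hr) q (Finset.mem_insert_self q s) hrq)
        · exact h1



/-- The Vandermonde product `∏_{i<j} (X j - X i)`. -/
noncomputable def vmd (n : ℕ) : MvPolynomial (Fin n) ℚ :=
  ∏ i : Fin n, ∏ j ∈ Finset.Ioi i, (X j - X i)

/-- The index set of pairs `i < j`. -/
noncomputable def QS (n : ℕ) : Finset (Σ _ : Fin n, Fin n) :=
  (Finset.univ : Finset (Fin n)).sigma fun i => Finset.Ioi i

theorem mem_QS {q : Σ _ : Fin n, Fin n} : q ∈ QS n ↔ q.1 < q.2 := by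
  simp [QS, Finset.mem_sigma]

theorem vmd_eq_prod : vmd n = ∏ q ∈ QS n, (X q.2 - X q.1) := by
  rw [vmd, QS, Finset.prod_sigma']

theorem prime_vmd_factor {q : Σ _ : Fin n, Fin n} (hq : q ∈ QS n) :
    Prime (X q.2 - X q.1 : MvPolynomial (Fin n) ℚ) :=
  prime_X_sub_X (mem_QS.1 hq).ne'

theorem vmd_ne_zero : vmd n ≠ 0 := by
  rw [vmd_eq_prod]
  exact Finset.prod_ne_zero_iff.2 fun q hq => (prime_vmd_factor hq).ne_zero

theorem not_associated_vmd_factors {q q' : Σ _ : Fin n, Fin n}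
    (hq : q ∈ QS n) (hq' : q' ∈ QS n) (hne : q ≠ q') :
    ¬Associated (X q.2 - X q.1 : MvPolynomial (Fin n) ℚ) (X q'.2 - X q'.1) := by
  have h1 : q.1 < q.2 := mem_QS.1 hq
  have h2 : q'.1 < q'.2 := mem_QS.1 hq'
  rintro ⟨u, hu⟩
  have key : subst q.1 q.2 ((X q.2 - X q.1 : MvPolynomial (Fin n) ℚ) * u)
      = subst q.1 q.2 (X q'.2 - X q'.1) := by rw [hu]
  rw [map_mul, map_sub, subst_X, subst_X, if_pos rfl, if_neg h1.ne', sub_self, zero_mul] at key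
  rw [map_sub, subst_X, subst_X] at key
  -- show RHS is nonzero
  have hw : (if q'.2 = q.1 then q.2 else q'.2) ≠ (if q'.1 = q.1 then q.2 else q'.1) := by
    rcases eq_or_ne q'.1 q.1 with e1 | e1
    · rw [if_pos e1]
      rcases eq_or_ne q'.2 q.1 with e2 | e2
      · exact absurd (e2.trans e1.symm) h2.ne'
      · rw [if_neg e2]
        intro hh
        exact hne (Sigma.ext e1.symm (heq_of_eq hh.symm))
    · rw [if_neg e1]
      rcases eq_or_ne q'.2 q.1 with e2 | e2
      · rw [if_pos e2]
        intro hh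
        exact absurd (((h2.trans_eq e2).trans h1).trans_eq hh) (lt_irrefl _)
      · rw [if_neg e2]
        exact h2.ne'
  have : (X (if q'.2 = q.1 then q.2 else q'.2) : MvPolynomial (Fin n) ℚ)
      - X (if q'.1 = q.1 then q.2 else q'.1) ≠ 0 := by
    refine sub_ne_zero.2 fun hh => hw (MvPolynomial.X_injective hh)
  apply this
  rw [apply_ite (X (R := ℚ)), apply_ite (X (R := ℚ))]
  exact key.symm



theorem rename_vmd (tau : Equiv.Perm (Fin n)) :
    rename tau (vmd n) = ((Equiv.Perm.sign tau : ℤ) : MvPolynomial (Fin n) ℚ) * vmd n := by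
  have h1 : rename tau (vmd n)
      = ∏ i : Fin n, ∏ j ∈ Finset.Ioi i,
          ((X (tau j) : MvPolynomial (Fin n) ℚ) - X (tau i)) := by
    rw [vmd, map_prod]
    refine Finset.prod_congr rfl fun i _ => ?_
    rw [map_prod]
    exact Finset.prod_congr rfl fun j _ => by rw [map_sub, rename_X, rename_X]
  have h2 : (Matrix.vandermonde fun k : Fin n => (X (tau k) : MvPolynomial (Fin n) ℚ))
      = (Matrix.vandermonde fun k : Fin n => (X k : MvPolynomial (Fin n) ℚ)).submatrix tau id := by
    ext a b
    simp [Matrix.vandermonde]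
  rw [h1, ← Matrix.det_vandermonde, h2, Matrix.det_permute, Matrix.det_vandermonde, ← vmd]



section DE

variable {d e : ℕ}

/-- Numerator polynomial. -/
noncomputable def NP (f : MvPolynomial (Fin d) ℚ) (g : MvPolynomial (Fin e) ℚ)
    (sigma : Equiv.Perm (Fin (d + e))) : MvPolynomial (Fin (d + e)) ℚ :=
  rename (fun i : Fin d => sigma (Fin.castAdd e i)) f *
    rename (fun j : Fin e => sigma (Fin.natAdd d j)) g

/-- Denominator polynomial. -/
noncomputable def DP (d e : ℕ) (sigma : Equiv.Perm (Fin (d + e))) :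
    MvPolynomial (Fin (d + e)) ℚ :=
  ∏ μ : Fin d, ∏ ν : Fin e,
    (X (sigma (Fin.natAdd d ν)) - X (sigma (Fin.castAdd e μ)))

theorem castAdd_ne_natAdd (μ : Fin d) (ν : Fin e) :
    Fin.castAdd e μ ≠ Fin.natAdd d ν := by
  intro h
  have h1 : ((Fin.castAdd e μ : Fin (d + e)) : ℕ) = μ := rfl
  have h2 : ((Fin.natAdd d ν : Fin (d + e)) : ℕ) = d + ν := rfl
  have := congrArg (fun x : Fin (d + e) => (x : ℕ)) h
  simp only [h1, h2] at this
  omega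

theorem rename_NP (f : MvPolynomial (Fin d) ℚ) (g : MvPolynomial (Fin e) ℚ)
    (tau sigma : Equiv.Perm (Fin (d + e))) :
    rename tau (NP f g sigma) = NP f g (tau * sigma) := by
  rw [NP, map_mul, rename_rename, rename_rename, NP]
  rfl

theorem rename_DP (tau sigma : Equiv.Perm (Fin (d + e))) :
    rename tau (DP d e sigma) = DP d e (tau * sigma) := by
  rw [DP, map_prod]
  refine Finset.prod_congr rfl fun μ _ => ?_
  rw [map_prod]
  refine Finset.prod_congr rfl fun ν _ => ?_
  rw [map_sub, rename_X, rename_X]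
  rfl

theorem DP_ne_zero (sigma : Equiv.Perm (Fin (d + e))) : DP d e sigma ≠ 0 := by
  rw [DP]
  refine Finset.prod_ne_zero_iff.2 fun μ _ => Finset.prod_ne_zero_iff.2 fun ν _ => ?_
  refine sub_ne_zero.2 fun hh => ?_
  exact castAdd_ne_natAdd μ ν (sigma.injective (MvPolynomial.X_injective hh)).symm

theorem natAdd_injective' (d : ℕ) : Function.Injective (Fin.natAdd d : Fin e → Fin (d + e)) := by
  intro x y h
  have := congrArg (fun z : Fin (d + e) => (z : ℕ)) h
  simp only [Fin.coe_natAdd] at this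
  exact Fin.ext (by omega)

/-- The factorization of the Vandermonde through the denominator. -/
theorem DP_dvd_vmd (sigma : Equiv.Perm (Fin (d + e))) :
    ∃ W : MvPolynomial (Fin (d + e)) ℚ, DP d e sigma * W = vmd (d + e) := by
  classical
  set a : Fin d × Fin e → Fin (d + e) := fun x => sigma (Fin.castAdd e x.1) with ha
  set b : Fin d × Fin e → Fin (d + e) := fun x => sigma (Fin.natAdd d x.2) with hb
  have hab : ∀ x y : Fin d × Fin e, a x ≠ b y := fun x y hx =>
    castAdd_ne_natAdd x.1 y.2 (sigma.injective hx)
  set m : Fin d × Fin e → Σ _ : Fin (d + e), Fin (d + e) :=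
    fun x => if a x < b x then ⟨a x, b x⟩ else ⟨b x, a x⟩ with hm
  set ep : Fin d × Fin e → MvPolynomial (Fin (d + e)) ℚ :=
    fun x => if a x < b x then 1 else -1 with hep
  have hfac : ∀ x, (X (b x) : MvPolynomial (Fin (d + e)) ℚ) - X (a x)
      = ep x * (X (m x).2 - X (m x).1) := by
    intro x
    by_cases h : a x < b x
    · simp [hm, hep, h]
    · simp only [hm, hep, if_neg h]
      ring
  have hDP : DP d e sigma
      = (∏ x : Fin d × Fin e, ep x) *
        ∏ x : Fin d × Fin e, ((X (m x).2 : MvPolynomial (Fin (d + e)) ℚ) - X (m x).1) := by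
    rw [DP, ← Fintype.prod_prod_type', ← Finset.prod_mul_distrib]
    exact Finset.prod_congr rfl fun x _ => hfac x
  have hsq : (∏ x : Fin d × Fin e, ep x) * (∏ x : Fin d × Fin e, ep x) = 1 := by
    rw [← Finset.prod_mul_distrib]
    refine Finset.prod_eq_one fun x _ => ?_
    by_cases h : a x < b x <;> simp [hep, h]
  have hinj : ∀ x ∈ (Finset.univ : Finset (Fin d × Fin e)), ∀ y ∈ Finset.univ,
      m x = m y → x = y := by
    intro x _ y _ hxy
    have key : a x = a y ∧ b x = b y := by
      by_cases h1 : a x < b x <;> by_cases h2 : a y < b y <;>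
        simp only [hm, if_pos, if_neg, h1, h2, ite_true, ite_false, Sigma.mk.inj_iff] at hxy
      · exact ⟨hxy.1, eq_of_heq hxy.2⟩
      · exact absurd hxy.1 (hab x y)
      · exact absurd hxy.1.symm (hab y x)
      · exact ⟨eq_of_heq hxy.2, hxy.1⟩
    refine Prod.ext ?_ ?_
    · exact Fin.castAdd_injective d e (sigma.injective key.1)
    · exact natAdd_injective' d (sigma.injective key.2)
  have hsub : Finset.image m Finset.univ ⊆ QS (d + e) := by
    intro q hq
    obtain ⟨x, _, rfl⟩ := Finset.mem_image.1 hq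
    rw [mem_QS]
    by_cases h : a x < b x
    · simpa [hm, h] using h
    · have : b x < a x := lt_of_le_of_ne (not_lt.1 h) fun hh => hab x x hh.symm
      simpa [hm, h] using this
  have himg : ∏ x : Fin d × Fin e, ((X (m x).2 : MvPolynomial (Fin (d + e)) ℚ) - X (m x).1)
      = ∏ q ∈ Finset.image m Finset.univ, ((X q.2 : MvPolynomial (Fin (d + e)) ℚ) - X q.1) := by
    rw [Finset.prod_image hinj]
  refine ⟨(∏ x : Fin d × Fin e, ep x) *
    ∏ q ∈ QS (d + e) \ Finset.image m Finset.univ, ((X q.2 : MvPolynomial (Fin (d + e)) ℚ) - X q.1), ?_⟩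
  rw [hDP, vmd_eq_prod]
  calc ((∏ x : Fin d × Fin e, ep x) *
        ∏ x : Fin d × Fin e, ((X (m x).2 : MvPolynomial (Fin (d + e)) ℚ) - X (m x).1)) *
        ((∏ x : Fin d × Fin e, ep x) *
        ∏ q ∈ QS (d + e) \ Finset.image m Finset.univ, ((X q.2 : MvPolynomial (Fin (d + e)) ℚ) - X q.1))
      = ((∏ x : Fin d × Fin e, ep x) * (∏ x : Fin d × Fin e, ep x)) *
        ((∏ q ∈ QS (d + e) \ Finset.image m Finset.univ,
            ((X q.2 : MvPolynomial (Fin (d + e)) ℚ) - X q.1)) *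
          ∏ q ∈ Finset.image m Finset.univ, ((X q.2 : MvPolynomial (Fin (d + e)) ℚ) - X q.1)) := by
        rw [himg]; ring
    _ = ∏ q ∈ QS (d + e), ((X q.2 : MvPolynomial (Fin (d + e)) ℚ) - X q.1) := by
        rw [hsq, one_mul, Finset.prod_sdiff hsub]



/-- The block permutation acting as `α` on the first `d` and `β` on the last `e`. -/
def blockPerm (al : Equiv.Perm (Fin d)) (be : Equiv.Perm (Fin e)) :
    Equiv.Perm (Fin (d + e)) :=
  (finSumFinEquiv.symm.trans ((Equiv.sumCongr al be).trans finSumFinEquiv))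

theorem blockPerm_castAdd (al : Equiv.Perm (Fin d)) (be : Equiv.Perm (Fin e)) (i : Fin d) :
    blockPerm al be (Fin.castAdd e i) = Fin.castAdd e (al i) := by
  simp [blockPerm, Equiv.sumCongr_apply]

theorem blockPerm_natAdd (al : Equiv.Perm (Fin d)) (be : Equiv.Perm (Fin e)) (j : Fin e) :
    blockPerm al be (Fin.natAdd d j) = Fin.natAdd d (be j) := by
  simp [blockPerm, Equiv.sumCongr_apply]

theorem NP_mul_block {f : MvPolynomial (Fin d) ℚ} {g : MvPolynomial (Fin e) ℚ}
    (hf : f.IsSymmetric) (hg : g.IsSymmetric) (s : Equiv.Perm (Fin (d + e)))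
    (al : Equiv.Perm (Fin d)) (be : Equiv.Perm (Fin e)) :
    NP f g (s * blockPerm al be) = NP f g s := by
  rw [NP, NP]
  congr 1
  · have h1 : (fun i : Fin d => (s * blockPerm al be) (Fin.castAdd e i))
        = (fun i : Fin d => s (Fin.castAdd e i)) ∘ al := by
      funext i
      simp [Equiv.Perm.mul_apply, blockPerm_castAdd]
    rw [h1, ← rename_rename, hf al]
  · have h1 : (fun j : Fin e => (s * blockPerm al be) (Fin.natAdd d j))
        = (fun j : Fin e => s (Fin.natAdd d j)) ∘ be := by
      funext j
      simp [Equiv.Perm.mul_apply, blockPerm_natAdd]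
    rw [h1, ← rename_rename, hg be]

theorem DP_mul_block (s : Equiv.Perm (Fin (d + e)))
    (al : Equiv.Perm (Fin d)) (be : Equiv.Perm (Fin e)) :
    DP d e (s * blockPerm al be) = DP d e s := by
  rw [DP, DP]
  rw [← Equiv.prod_comp al
    (fun μ => ∏ ν : Fin e, ((X (s (Fin.natAdd d ν)) : MvPolynomial (Fin (d + e)) ℚ)
      - X (s (Fin.castAdd e μ))))]
  refine Finset.prod_congr rfl fun μ _ => ?_
  rw [← Equiv.prod_comp be
    (fun ν => ((X (s (Fin.natAdd d ν)) : MvPolynomial (Fin (d + e)) ℚ)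
      - X (s (Fin.castAdd e (al μ)))))]
  refine Finset.prod_congr rfl fun ν _ => ?_
  simp [Equiv.Perm.mul_apply, blockPerm_castAdd, blockPerm_natAdd]

theorem shuffle_decomp (sigma : Equiv.Perm (Fin (d + e))) :
    ∃ (s : Equiv.Perm (Fin (d + e))) (al : Equiv.Perm (Fin d)) (be : Equiv.Perm (Fin e)),
      IsShuffle s ∧ sigma = s * blockPerm al be := by
  classical
  set a0 := Tuple.sort (fun μ : Fin d => sigma (Fin.castAdd e μ)) with ha0
  set b0 := Tuple.sort (fun ν : Fin e => sigma (Fin.natAdd d ν)) with hb0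
  refine ⟨sigma * blockPerm a0 b0, a0⁻¹, b0⁻¹, ⟨?_, ?_⟩, ?_⟩
  · have hmono : Monotone ((fun μ : Fin d => sigma (Fin.castAdd e μ)) ∘ a0) :=
      Tuple.monotone_sort _
    have hinj : Function.Injective ((fun μ : Fin d => sigma (Fin.castAdd e μ)) ∘ a0) := by
      intro x y h
      exact a0.injective (Fin.castAdd_injective d e (sigma.injective h))
    have hsm : StrictMono ((fun μ : Fin d => sigma (Fin.castAdd e μ)) ∘ a0) :=
      hmono.strictMono_of_injective hinj
    have heq : (fun i : Fin d => (sigma * blockPerm a0 b0) (Fin.castAdd e i))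
        = ((fun μ : Fin d => sigma (Fin.castAdd e μ)) ∘ a0) := by
      funext i
      simp [Equiv.Perm.mul_apply, blockPerm_castAdd]
    rw [heq]
    exact hsm
  · have hmono : Monotone ((fun ν : Fin e => sigma (Fin.natAdd d ν)) ∘ b0) :=
      Tuple.monotone_sort _
    have hinj : Function.Injective ((fun ν : Fin e => sigma (Fin.natAdd d ν)) ∘ b0) := by
      intro x y h
      exact b0.injective (natAdd_injective' d (sigma.injective h))
    have hsm : StrictMono ((fun ν : Fin e => sigma (Fin.natAdd d ν)) ∘ b0) :=
      hmono.strictMono_of_injective hinj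
    have heq : (fun j : Fin e => (sigma * blockPerm a0 b0) (Fin.natAdd d j))
        = ((fun ν : Fin e => sigma (Fin.natAdd d ν)) ∘ b0) := by
      funext j
      simp [Equiv.Perm.mul_apply, blockPerm_natAdd]
    rw [heq]
    exact hsm
  · refine Equiv.ext fun x => ?_
    refine Fin.addCases (fun i => ?_) (fun j => ?_) x
    · simp [Equiv.Perm.mul_apply, blockPerm_castAdd]
    · simp [Equiv.Perm.mul_apply, blockPerm_natAdd]

/-- Two strictly monotone tuples with the same composition factors agree. -/
theorem block_inj {s s' : Equiv.Perm (Fin (d + e))}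
    (hs : IsShuffle s) (hs' : IsShuffle s')
    {al al' : Equiv.Perm (Fin d)} {be be' : Equiv.Perm (Fin e)}
    (h : s * blockPerm al be = s' * blockPerm al' be') :
    s = s' ∧ al = al' ∧ be = be' := by
  have hc : ∀ i : Fin d, s (Fin.castAdd e (al i)) = s' (Fin.castAdd e (al' i)) := by
    intro i
    have := congrArg (fun p : Equiv.Perm (Fin (d + e)) => p (Fin.castAdd e i)) h
    simpa [Equiv.Perm.mul_apply, blockPerm_castAdd] using this
  have hnn : ∀ j : Fin e, s (Fin.natAdd d (be j)) = s' (Fin.natAdd d (be' j)) := by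
    intro j
    have := congrArg (fun p : Equiv.Perm (Fin (d + e)) => p (Fin.natAdd d j)) h
    simpa [Equiv.Perm.mul_apply, blockPerm_natAdd] using this
  -- common function
  set G : Fin d → Fin (d + e) := fun i => s (Fin.castAdd e (al i)) with hG
  have hG1 : (fun i : Fin d => s (Fin.castAdd e i)) = G ∘ ⇑al⁻¹ := by
    funext i; simp [hG]
  have hG2 : (fun i : Fin d => s' (Fin.castAdd e i)) = G ∘ ⇑al'⁻¹ := by
    funext i; simp [hG, hc]
  have hgg : (fun i : Fin d => s (Fin.castAdd e i)) = (fun i : Fin d => s' (Fin.castAdd e i)) := by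
    rw [hG1, hG2]
    exact Tuple.unique_monotone (hG1 ▸ hs.1.monotone) (hG2 ▸ hs'.1.monotone)
  set H : Fin e → Fin (d + e) := fun j => s (Fin.natAdd d (be j)) with hH
  have hH1 : (fun j : Fin e => s (Fin.natAdd d j)) = H ∘ ⇑be⁻¹ := by
    funext j; simp [hH]
  have hH2 : (fun j : Fin e => s' (Fin.natAdd d j)) = H ∘ ⇑be'⁻¹ := by
    funext j; simp [hH, hnn]
  have hhh : (fun j : Fin e => s (Fin.natAdd d j)) = (fun j : Fin e => s' (Fin.natAdd d j)) := by
    rw [hH1, hH2]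
    exact Tuple.unique_monotone (hH1 ▸ hs.2.monotone) (hH2 ▸ hs'.2.monotone)
  have hss : s = s' := by
    refine Equiv.ext fun x => ?_
    refine Fin.addCases (fun i => congrFun hgg i) (fun j => congrFun hhh j) x
  subst hss
  have hal : al = al' := by
    refine Equiv.ext fun i => ?_
    exact Fin.castAdd_injective d e (s.injective (hc i))
  have hbe : be = be' := by
    refine Equiv.ext fun j => ?_
    exact natAdd_injective' d (s.injective (hnn j))
  exact ⟨rfl, hal, hbe⟩


/-- The field automorphism of the fraction field induced by `rename tau`. -/
noncomputable def Psi (n : ℕ) (tau : Equiv.Perm (Fin n)) :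
    FractionRing (MvPolynomial (Fin n) ℚ) ≃+* FractionRing (MvPolynomial (Fin n) ℚ) :=
  IsFractionRing.ringEquivOfRingEquiv (renameEquiv ℚ tau).toRingEquiv

theorem Psi_algebraMap {n : ℕ} (tau : Equiv.Perm (Fin n)) (p : MvPolynomial (Fin n) ℚ) :
    Psi n tau (algebraMap _ _ p) = algebraMap _ (FractionRing (MvPolynomial (Fin n) ℚ))
      (rename tau p) := by
  rw [Psi, IsFractionRing.ringEquivOfRingEquiv_algebraMap]
  rfl

/-- The individual term of the shuffle sum. -/
noncomputable def TT (f : MvPolynomial (Fin d) ℚ) (g : MvPolynomial (Fin e) ℚ)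
    (sigma : Equiv.Perm (Fin (d + e))) : FractionRing (MvPolynomial (Fin (d + e)) ℚ) :=
  algebraMap _ _ (NP f g sigma) / algebraMap _ _ (DP d e sigma)

/-- The full (unnormalized) sum over all permutations. -/
noncomputable def SS (f : MvPolynomial (Fin d) ℚ) (g : MvPolynomial (Fin e) ℚ) :
    FractionRing (MvPolynomial (Fin (d + e)) ℚ) :=
  ∑ sigma : Equiv.Perm (Fin (d + e)), TT f g sigma

theorem aDP_ne_zero (sigma : Equiv.Perm (Fin (d + e))) :
    algebraMap _ (FractionRing (MvPolynomial (Fin (d + e)) ℚ)) (DP d e sigma) ≠ 0 := fun h =>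
  DP_ne_zero sigma (IsFractionRing.injective _ _ (by rw [h, map_zero]))

theorem a_vmd_ne_zero (n : ℕ) :
    algebraMap _ (FractionRing (MvPolynomial (Fin n) ℚ)) (vmd n) ≠ 0 := fun h =>
  vmd_ne_zero (IsFractionRing.injective _ _ (by rw [h, map_zero]))

theorem Psi_TT (f : MvPolynomial (Fin d) ℚ) (g : MvPolynomial (Fin e) ℚ)
    (tau sigma : Equiv.Perm (Fin (d + e))) :
    Psi (d + e) tau (TT f g sigma) = TT f g (tau * sigma) := by
  rw [TT, map_div₀, Psi_algebraMap, Psi_algebraMap, rename_NP, rename_DP, TT]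

theorem Psi_SS (f : MvPolynomial (Fin d) ℚ) (g : MvPolynomial (Fin e) ℚ)
    (tau : Equiv.Perm (Fin (d + e))) :
    Psi (d + e) tau (SS f g) = SS f g := by
  rw [SS, map_sum, Finset.sum_congr rfl fun σ _ => Psi_TT f g tau σ]
  exact Fintype.sum_equiv (Equiv.mulLeft tau) (fun σ => TT f g (tau * σ))
    (fun σ => TT f g σ) fun σ => rfl

theorem SS_eq_smul_shuffle_sum {f : MvPolynomial (Fin d) ℚ} {g : MvPolynomial (Fin e) ℚ}
    (hf : f.IsSymmetric) (hg : g.IsSymmetric) :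
    SS f g = ((d.factorial * e.factorial : ℕ) : FractionRing (MvPolynomial (Fin (d + e)) ℚ)) *
      ∑ σ ∈ Finset.univ.filter (fun σ : Equiv.Perm (Fin (d + e)) => IsShuffle σ),
        TT f g σ := by
  classical
  have hbij : ∑ x ∈ (Finset.univ.filter (fun σ : Equiv.Perm (Fin (d + e)) => IsShuffle σ)) ×ˢ
      (Finset.univ : Finset (Equiv.Perm (Fin d) × Equiv.Perm (Fin e))),
      TT f g (x.1 * blockPerm x.2.1 x.2.2) = SS f g := by
    rw [SS]
    refine Finset.sum_bij (fun x _ => x.1 * blockPerm x.2.1 x.2.2) (fun x _ => Finset.mem_univ _)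
      ?_ ?_ (fun x _ => rfl)
    · intro x hx y hy hxy
      have hx1 : IsShuffle x.1 := (Finset.mem_filter.1 (Finset.mem_product.1 hx).1).2
      have hy1 : IsShuffle y.1 := (Finset.mem_filter.1 (Finset.mem_product.1 hy).1).2
      obtain ⟨h1, h2, h3⟩ := block_inj hx1 hy1 hxy
      exact Prod.ext h1 (Prod.ext h2 h3)
    · intro σ _
      obtain ⟨s, al, be, hs, rfl⟩ := shuffle_decomp σ
      exact ⟨(s, (al, be)), Finset.mem_product.2
        ⟨Finset.mem_filter.2 ⟨Finset.mem_univ _, hs⟩, Finset.mem_univ _⟩, rfl⟩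
  rw [← hbij, Finset.sum_product, Finset.mul_sum]
  refine Finset.sum_congr rfl fun s hs => ?_
  have hconst : ∀ b : Equiv.Perm (Fin d) × Equiv.Perm (Fin e),
      TT f g (s * blockPerm b.1 b.2) = TT f g s := by
    intro b
    rw [TT, NP_mul_block hf hg, DP_mul_block, TT]
  rw [Finset.sum_congr rfl fun b _ => hconst b, Finset.sum_const, Finset.card_univ,
    Fintype.card_prod, Fintype.card_perm, Fintype.card_perm, Fintype.card_fin, Fintype.card_fin,
    nsmul_eq_mul]

theorem main_lemma (d e : ℕ) (f : MvPolynomial (Fin d) ℚ) (g : MvPolynomial (Fin e) ℚ)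
    (hf : f.IsSymmetric) (hg : g.IsSymmetric) :
    ∃ h : MvPolynomial (Fin (d + e)) ℚ, h.IsSymmetric ∧
      algebraMap (MvPolynomial (Fin (d + e)) ℚ)
          (FractionRing (MvPolynomial (Fin (d + e)) ℚ)) h =
        ∑ σ ∈ Finset.univ.filter (fun σ : Equiv.Perm (Fin (d + e)) => IsShuffle σ),
          TT f g σ := by
  classical
  have ha_inj : Function.Injective
      (algebraMap (MvPolynomial (Fin (d + e)) ℚ)
        (FractionRing (MvPolynomial (Fin (d + e)) ℚ))) := IsFractionRing.injective _ _
  choose W hW using fun σ : Equiv.Perm (Fin (d + e)) => DP_dvd_vmd (d := d) (e := e) σ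
  set A : MvPolynomial (Fin (d + e)) ℚ :=
    ∑ σ : Equiv.Perm (Fin (d + e)), NP f g σ * W σ with hAdef
  have key : algebraMap _ (FractionRing (MvPolynomial (Fin (d + e)) ℚ)) A
      = SS f g * algebraMap _ _ (vmd (d + e)) := by
    rw [hAdef, map_sum, SS, Finset.sum_mul]
    refine Finset.sum_congr rfl fun σ _ => ?_
    rw [map_mul, TT]
    have h1 : algebraMap _ (FractionRing (MvPolynomial (Fin (d + e)) ℚ)) (vmd (d + e))
        = algebraMap _ _ (DP d e σ) * algebraMap _ _ (W σ) := by
      rw [← map_mul, hW]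
    rw [h1]
    have h2 := aDP_ne_zero (d := d) (e := e) σ
    field_simp
  have hrenA : ∀ τ : Equiv.Perm (Fin (d + e)),
      rename τ A = ((Equiv.Perm.sign τ : ℤ) : MvPolynomial (Fin (d + e)) ℚ) * A := by
    intro τ
    refine ha_inj ?_
    rw [← Psi_algebraMap, key, map_mul, Psi_SS, Psi_algebraMap, rename_vmd, map_mul, map_mul, key]
    ring
  have hsubA : ∀ q ∈ QS (d + e), subst q.1 q.2 A = 0 := by
    intro q hq
    have hij : q.1 < q.2 := mem_QS.1 hq
    have hswap := hrenA (Equiv.swap q.1 q.2)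
    rw [Equiv.Perm.sign_swap hij.ne] at hswap
    have hswap' : rename (Equiv.swap q.1 q.2) A = -A := by
      rw [hswap]; push_cast; ring
    have h3 := subst_rename_swap q.1 q.2 hij.ne A
    rw [hswap', map_neg] at h3
    have h4 : subst q.1 q.2 A + subst q.1 q.2 A = 0 := by
      nth_rewrite 1 [← h3]
      ring
    exact add_self_eq_zero.1 h4
  have hdvd : ∀ q ∈ QS (d + e),
      ((X q.2 - X q.1 : MvPolynomial (Fin (d + e)) ℚ)) ∣ A := by
    intro q hq
    have h5 := dvd_sub_subst q.1 q.2 A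
    rw [hsubA q hq, sub_zero] at h5
    rw [← neg_sub (X q.1) (X q.2)]
    exact (neg_dvd).2 h5
  have hvdvd : vmd (d + e) ∣ A := by
    rw [vmd_eq_prod]
    exact prod_primes_dvd' (QS (d + e)) _ (fun q hq => prime_vmd_factor hq)
      (fun q hq q' hq' hne => not_associated_vmd_factors hq hq' hne) hdvd
  obtain ⟨h0, hh0⟩ := hvdvd
  have hS : SS f g = algebraMap _ (FractionRing (MvPolynomial (Fin (d + e)) ℚ)) h0 := by
    have h6 : algebraMap _ (FractionRing (MvPolynomial (Fin (d + e)) ℚ)) (vmd (d + e))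
        * algebraMap _ _ h0 = algebraMap _ _ (vmd (d + e)) * SS f g := by
      rw [← map_mul, ← hh0, key]
      ring
    exact (mul_left_cancel₀ (a_vmd_ne_zero (d + e)) h6).symm
  have hsym0 : h0.IsSymmetric := by
    intro τ
    have h7 := hrenA τ
    rw [hh0, map_mul, rename_vmd] at h7
    have h8 : ((Equiv.Perm.sign τ : ℤ) : MvPolynomial (Fin (d + e)) ℚ) ≠ 0 :=
      Int.cast_ne_zero.2 (Units.ne_zero _)
    have h9 : ((Equiv.Perm.sign τ : ℤ) : MvPolynomial (Fin (d + e)) ℚ)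
        * (vmd (d + e) * rename τ h0)
        = ((Equiv.Perm.sign τ : ℤ) : MvPolynomial (Fin (d + e)) ℚ) * (vmd (d + e) * h0) := by
      rw [← h7]; ring
    exact mul_left_cancel₀ vmd_ne_zero (mul_left_cancel₀ h8 h9)
  set c : ℚ := ((d.factorial * e.factorial : ℕ) : ℚ) with hc
  have hc0 : c ≠ 0 := Nat.cast_ne_zero.2 (Nat.mul_ne_zero d.factorial_ne_zero e.factorial_ne_zero)
  refine ⟨C c⁻¹ * h0, ?_, ?_⟩
  · intro τ
    rw [map_mul, rename_C, hsym0 τ]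
  · rw [map_mul, ← hS, SS_eq_smul_shuffle_sum hf hg]
    have h10 : ((d.factorial * e.factorial : ℕ) : FractionRing (MvPolynomial (Fin (d + e)) ℚ))
        = algebraMap _ _ (C c : MvPolynomial (Fin (d + e)) ℚ) := by
      rw [hc, map_natCast (C : ℚ →+* MvPolynomial (Fin (d + e)) ℚ), map_natCast]
    rw [h10, ← mul_assoc, ← map_mul, ← C_mul, inv_mul_cancel₀ hc0, C_1, map_one, one_mul]

end DE
end CohaAux

/-- for the one-vertex quiver with no arrows, the CoHa product of
symmetric polynomials `f ∈ ℚ[x_1,…,x_d]^{S_d}` and `g ∈ ℚ[x_1,…,x_e]^{S_e}`,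
given by the shuffle formula
`Σ_σ f(x_{σ(1)},…,x_{σ(d)}) g(x_{σ(d+1)},…,x_{σ(d+e)}) / Π_{μ≤d<ν}(x_{σ(ν)} − x_{σ(μ)})`
(a sum of rational functions), is a symmetric polynomial in `x_1,…,x_{d+e}`. -/
theorem coha_product_is_symmetric_polynomial (d e : ℕ)
    (f : MvPolynomial (Fin d) ℚ) (g : MvPolynomial (Fin e) ℚ)
    (hf : f.IsSymmetric) (hg : g.IsSymmetric) :
    ∃ h : MvPolynomial (Fin (d + e)) ℚ, h.IsSymmetric ∧
      algebraMap (MvPolynomial (Fin (d + e)) ℚ)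
          (FractionRing (MvPolynomial (Fin (d + e)) ℚ)) h =
        ∑ σ ∈ Finset.univ.filter
            (fun σ : Equiv.Perm (Fin (d + e)) => IsShuffle σ),
          (algebraMap (MvPolynomial (Fin (d + e)) ℚ) _
              (rename (fun i : Fin d => σ (Fin.castAdd e i)) f *
                rename (fun j : Fin e => σ (Fin.natAdd d j)) g)) /
            (algebraMap (MvPolynomial (Fin (d + e)) ℚ) _
              (∏ μ : Fin d, ∏ ν : Fin e,
                (X (σ (Fin.natAdd d ν)) - X (σ (Fin.castAdd e μ))))) := by
  obtain ⟨h, h1, h2⟩ := CohaAux.main_lemma d e f g hf hg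
  refine ⟨h, h1, ?_⟩
  rw [h2]
  rfl
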